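/- Let R be a ring with identity, a, b, c ∈ R and j_a, j_b, j_c ∈ J(R). Suppose a^{‖(b,c)} exists, b⁺ and c⁺ are reflexive inverses of b and c, and that (1 − b·b⁺)·j_b·(1 + b⁺·j_b)⁻¹·(1 − b⁺·b) = 0 and (1 − c·c⁺)·j_c·(1 + c⁺·j_c)⁻¹·(1 − c⁺·c) = 0. Then the (b + j_b, c + j_c)-inverse of a exists and equals (1 + j_b·b⁺)·(1 + a^{‖(b,c)}·(a·j_b·b⁺ + c⁺·j_c·a + c⁺·j_c·a·j_b·b⁺))⁻¹·a^{‖(b,c)}·(1 + c⁺·j_c); moreover 1 + a^{‖(b+j_b,c+j_c)}·j_a is a unit and the (b + j_b, c + j_c)-inverse of a + j_a equals (1 + a^{‖(b+j_b,c+j_c)}·j_a)⁻¹·a^{‖(b+j_b,c+j_c)}. -/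

import Mathlib

/-- `y` is the (b,c)-inverse of `a`: `c*a*y = c`, `y*a*b = b`, `y ∈ bR ∩ Rc`. -/
def IsBCInverse {R : Type*} [Ring R] (a b c y : R) : Prop :=
  c * a * y = c ∧ y * a * b = b ∧ (∃ s, y = b * s) ∧ (∃ t, y = t * c)

section Aux

variable {R : Type*} [Ring R]

lemma aux_mul_right {x : R} (hx : x ∈ Ideal.jacobson (⊥ : Ideal R)) (r : R) :
    x * r ∈ Ideal.jacobson (⊥ : Ideal R) := by
  exact Ideal.mul_mem_right r _ hx

lemma aux_unit_one_add {x : R} (hx : x ∈ Ideal.jacobson (⊥ : Ideal R)) : IsUnit (1 + x) := by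
  obtain ⟨z, hz⟩ := Ideal.mem_jacobson_iff.1 hx 1
  rw [Ideal.mem_bot] at hz
  have hz1 : z * (1 + x) = 1 := by
    have h2 : z * (1 + x) - 1 = z * 1 * x + z - 1 := by noncomm_ring
    rw [hz] at h2
    exact sub_eq_zero.1 h2
  obtain ⟨z', hz'⟩ := Ideal.mem_jacobson_iff.1
    (neg_mem (Ideal.mul_mem_left _ z hx)) 1
  rw [Ideal.mem_bot] at hz'
  have hzz : z = 1 + -(z * x) := by
    have e : z * (1 + x) = z + z * x := by noncomm_ring
    rw [e] at hz1
    have := eq_sub_of_add_eq hz1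
    rw [sub_eq_add_neg] at this
    exact this
  have hz2 : z' * z = 1 := by
    have h2 : z' * z - 1 = z' * 1 * -(z * x) + z' - 1 := by
      nth_rewrite 1 [hzz]
      noncomm_ring
    rw [hz'] at h2
    exact sub_eq_zero.1 h2
  have e1 : z' = 1 + x := by
    calc z' = z' * (z * (1 + x)) := by rw [hz1, mul_one]
    _ = z' * z * (1 + x) := by rw [mul_assoc]
    _ = 1 + x := by rw [hz2, one_mul]
  exact ⟨⟨1 + x, z, by rw [← e1]; exact hz2, hz1⟩, rfl⟩

lemma aux_swap (x s : R) (h1 : IsUnit (1 + x * s)) (h2 : IsUnit (1 + s * x)) :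
    Ring.inverse (1 + x * s) * x = x * Ring.inverse (1 + s * x) := by
  have c1 := Ring.inverse_mul_cancel _ h1
  have c2 := Ring.mul_inverse_cancel _ h2
  calc Ring.inverse (1 + x * s) * x
      = Ring.inverse (1 + x * s) * x * ((1 + s * x) * Ring.inverse (1 + s * x)) := by
        rw [c2, mul_one]
    _ = Ring.inverse (1 + x * s) * ((1 + x * s) * (x * Ring.inverse (1 + s * x))) := by
        noncomm_ring
    _ = x * Ring.inverse (1 + s * x) := by rw [← mul_assoc, c1, one_mul]

end Aux

/-- under the hypotheses, `a` is (b+j_b, c+j_c)-invertible with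
`a^{‖(b+j_b,c+j_c)} = (1 + j_b b⁺)(1 + a^{‖(b,c)}(a j_b b⁺ + c⁺ j_c a + c⁺ j_c a j_b b⁺))⁻¹ a^{‖(b,c)} (1 + c⁺ j_c)`,
`1 + a^{‖(b+j_b,c+j_c)} j_a` is a unit and
`(a + j_a)^{‖(b+j_b,c+j_c)} = (1 + a^{‖(b+j_b,c+j_c)} j_a)⁻¹ a^{‖(b+j_b,c+j_c)}`. -/
theorem stmt3 {R : Type*} [Ring R] (a b c y bp cp ja jb jc : R)
    (hja : ja ∈ Ideal.jacobson (⊥ : Ideal R))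
    (hjb : jb ∈ Ideal.jacobson (⊥ : Ideal R))
    (hjc : jc ∈ Ideal.jacobson (⊥ : Ideal R))
    (hy : IsBCInverse a b c y)
    (hbp : b * bp * b = b ∧ bp * b * bp = bp)
    (hcp : c * cp * c = c ∧ cp * c * cp = cp)
    (hb0 : (1 - b * bp) * jb * Ring.inverse (1 + bp * jb) * (1 - bp * b) = 0)
    (hc0 : (1 - c * cp) * jc * Ring.inverse (1 + cp * jc) * (1 - cp * c) = 0) :
    ∀ w : R, w = (1 + jb * bp)
        * Ring.inverse (1 + y * (a * jb * bp + cp * jc * a + cp * jc * a * jb * bp))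
        * y * (1 + cp * jc) →
      IsBCInverse a (b + jb) (c + jc) w ∧
      IsUnit (1 + w * ja) ∧
      IsBCInverse (a + ja) (b + jb) (c + jc) (Ring.inverse (1 + w * ja) * w) := by
  intro w hw
  obtain ⟨hcay, hyab, ⟨s, hs⟩, ⟨t, ht⟩⟩ := hy
  set k := a * jb * bp + cp * jc * a + cp * jc * a * jb * bp with hk
  -- Jacobson radical memberships
  have mk : k ∈ Ideal.jacobson (⊥ : Ideal R) := by
    rw [hk]
    refine add_mem (add_mem ?_ ?_) ?_
    · exact aux_mul_right (Ideal.mul_mem_left _ a hjb) bp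
    · exact aux_mul_right (Ideal.mul_mem_left _ cp hjc) a
    · exact aux_mul_right (aux_mul_right (aux_mul_right (Ideal.mul_mem_left _ cp hjc) a) jb) bp
  -- units
  have hu : IsUnit (1 + y * k) := aux_unit_one_add (Ideal.mul_mem_left _ y mk)
  have hv : IsUnit (1 + k * y) := aux_unit_one_add (aux_mul_right mk y)
  have hβ : IsUnit (1 + bp * jb) := aux_unit_one_add (Ideal.mul_mem_left _ bp hjb)
  have hγ : IsUnit (1 + jc * cp) := aux_unit_one_add (aux_mul_right hjc cp)
  have hH : IsUnit (1 + bp * jb * Ring.inverse (1 + bp * jb) * (1 - bp * b)) :=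
    aux_unit_one_add (aux_mul_right (aux_mul_right (Ideal.mul_mem_left _ bp hjb)
      (Ring.inverse (1 + bp * jb))) (1 - bp * b))
  have hG : IsUnit (1 + (1 - c * cp) * Ring.inverse (1 + jc * cp) * jc * cp) :=
    aux_unit_one_add (aux_mul_right
      (Ideal.mul_mem_left _ ((1 - c * cp) * Ring.inverse (1 + jc * cp)) hjc) cp)
  have hq : IsUnit (1 + cp * jc) := aux_unit_one_add (Ideal.mul_mem_left _ cp hjc)
  -- cancel equations
  have cu2 : Ring.inverse (1 + y * k) * (1 + y * k) = 1 := Ring.inverse_mul_cancel _ hu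
  have cv1 : (1 + k * y) * Ring.inverse (1 + k * y) = 1 := Ring.mul_inverse_cancel _ hv
  have cβ1 : (1 + bp * jb) * Ring.inverse (1 + bp * jb) = 1 := Ring.mul_inverse_cancel _ hβ
  have cγ2 : Ring.inverse (1 + jc * cp) * (1 + jc * cp) = 1 := Ring.inverse_mul_cancel _ hγ
  have cH1 : (1 + bp * jb * Ring.inverse (1 + bp * jb) * (1 - bp * b))
      * Ring.inverse (1 + bp * jb * Ring.inverse (1 + bp * jb) * (1 - bp * b)) = 1 :=
    Ring.mul_inverse_cancel _ hH
  have cG2 : Ring.inverse (1 + (1 - c * cp) * Ring.inverse (1 + jc * cp) * jc * cp)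
      * (1 + (1 - c * cp) * Ring.inverse (1 + jc * cp) * jc * cp) = 1 :=
    Ring.inverse_mul_cancel _ hG
  -- basic identities
  have hyay : y * a * y = y := by
    have e : y * a * y = t * (c * a * y) := by rw [ht]; noncomm_ring
    rw [e, hcay, ← ht]
  have hswap_u : Ring.inverse (1 + y * k) * y = y * Ring.inverse (1 + k * y) :=
    aux_swap y k hu hv
  have hswap_c : Ring.inverse (1 + jc * cp) * jc = jc * Ring.inverse (1 + cp * jc) :=
    aux_swap jc cp hγ hq
  -- factorization b + jb = (1+jb*bp) * b * H
  have e0 : (1 - b * bp) * jb * Ring.inverse (1 + bp * jb) * (1 - bp * b)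
      = jb * Ring.inverse (1 + bp * jb) * (1 - bp * b)
        - b * bp * (jb * Ring.inverse (1 + bp * jb) * (1 - bp * b)) := by noncomm_ring
  rw [hb0] at e0
  have e1 : jb * Ring.inverse (1 + bp * jb) * (1 - bp * b)
      = b * bp * (jb * Ring.inverse (1 + bp * jb) * (1 - bp * b)) :=
    sub_eq_zero.1 e0.symm
  have hb1 : (1 + jb * bp) * b * (1 + bp * jb * Ring.inverse (1 + bp * jb) * (1 - bp * b))
      = b + jb := by
    calc (1 + jb * bp) * b * (1 + bp * jb * Ring.inverse (1 + bp * jb) * (1 - bp * b))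
        = (1 + jb * bp) * b
          + (1 + jb * bp) * (b * bp * (jb * Ring.inverse (1 + bp * jb) * (1 - bp * b))) := by
          noncomm_ring
      _ = (1 + jb * bp) * b
          + (1 + jb * bp) * (jb * Ring.inverse (1 + bp * jb) * (1 - bp * b)) := by rw [← e1]
      _ = (1 + jb * bp) * b
          + jb * ((1 + bp * jb) * Ring.inverse (1 + bp * jb)) * (1 - bp * b) := by noncomm_ring
      _ = (1 + jb * bp) * b + jb * 1 * (1 - bp * b) := by rw [cβ1]
      _ = b + jb := by noncomm_ring
  -- factorization c + jc = G * c * (1+cp*jc)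
  have hc0' : (1 - c * cp) * Ring.inverse (1 + jc * cp) * jc * (1 - cp * c) = 0 := by
    have e : (1 - c * cp) * Ring.inverse (1 + jc * cp) * jc * (1 - cp * c)
        = (1 - c * cp) * (Ring.inverse (1 + jc * cp) * jc) * (1 - cp * c) := by noncomm_ring
    rw [e, hswap_c]
    calc (1 - c * cp) * (jc * Ring.inverse (1 + cp * jc)) * (1 - cp * c)
        = (1 - c * cp) * jc * Ring.inverse (1 + cp * jc) * (1 - cp * c) := by noncomm_ring
      _ = 0 := hc0
  have e0c : (1 - c * cp) * Ring.inverse (1 + jc * cp) * jc * (1 - cp * c)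
      = (1 - c * cp) * Ring.inverse (1 + jc * cp) * jc
        - (1 - c * cp) * Ring.inverse (1 + jc * cp) * jc * (cp * c) := by noncomm_ring
  rw [hc0'] at e0c
  have e1c : (1 - c * cp) * Ring.inverse (1 + jc * cp) * jc * (cp * c)
      = (1 - c * cp) * Ring.inverse (1 + jc * cp) * jc :=
    (sub_eq_zero.1 e0c.symm).symm
  have hc1 : (1 + (1 - c * cp) * Ring.inverse (1 + jc * cp) * jc * cp) * c * (1 + cp * jc)
      = c + jc := by
    calc (1 + (1 - c * cp) * Ring.inverse (1 + jc * cp) * jc * cp) * c * (1 + cp * jc)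
        = c * (1 + cp * jc)
          + ((1 - c * cp) * Ring.inverse (1 + jc * cp) * jc * (cp * c)) * (1 + cp * jc) := by
          noncomm_ring
      _ = c * (1 + cp * jc)
          + ((1 - c * cp) * Ring.inverse (1 + jc * cp) * jc) * (1 + cp * jc) := by rw [e1c]
      _ = c * (1 + cp * jc)
          + (1 - c * cp) * (Ring.inverse (1 + jc * cp) * (1 + jc * cp) * jc) := by noncomm_ring
      _ = c * (1 + cp * jc) + (1 - c * cp) * (1 * jc) := by rw [cγ2]
      _ = c + jc := by noncomm_ring
  -- the key expansion
  have M_qap : (1 + cp * jc) * a * (1 + jb * bp) = a + k := by rw [hk]; noncomm_ring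
  -- step lemmas
  have step_y : y * ((a + k) * (Ring.inverse (1 + y * k) * y)) = y := by
    rw [hswap_u]
    have e : y * ((a + k) * (y * Ring.inverse (1 + k * y)))
        = (y * a * y - y) * Ring.inverse (1 + k * y)
          + y * ((1 + k * y) * Ring.inverse (1 + k * y)) := by noncomm_ring
    rw [e, hyay, sub_self, zero_mul, zero_add, cv1, mul_one]
  have step_b : Ring.inverse (1 + y * k) * (y * ((a + k) * b)) = b := by
    have e : Ring.inverse (1 + y * k) * (y * ((a + k) * b))
        = Ring.inverse (1 + y * k) * (y * a * b - b)
          + Ring.inverse (1 + y * k) * ((1 + y * k) * b) := by noncomm_ring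
    rw [e, hyab, sub_self, mul_zero, zero_add, ← mul_assoc, cu2, one_mul]
  have step_c : c * ((a + k) * (Ring.inverse (1 + y * k) * y)) = c := by
    rw [hswap_u]
    have e : c * ((a + k) * (y * Ring.inverse (1 + k * y)))
        = (c * a * y - c) * Ring.inverse (1 + k * y)
          + c * ((1 + k * y) * Ring.inverse (1 + k * y)) := by noncomm_ring
    rw [e, hcay, sub_self, zero_mul, zero_add, cv1, mul_one]
  -- main equalities
  have M1 : w * a * (b + jb) = b + jb := by
    have e : w * a * (b + jb)
        = (1 + jb * bp) * (Ring.inverse (1 + y * k)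
            * (y * ((1 + cp * jc) * a * (1 + jb * bp) * b)))
          * (1 + bp * jb * Ring.inverse (1 + bp * jb) * (1 - bp * b)) := by
      rw [hw, ← hb1]; noncomm_ring
    rw [e, M_qap]
    have e2 : (a + k) * b = (a + k) * b := rfl
    calc (1 + jb * bp) * (Ring.inverse (1 + y * k) * (y * ((a + k) * b)))
          * (1 + bp * jb * Ring.inverse (1 + bp * jb) * (1 - bp * b))
        = (1 + jb * bp) * b
            * (1 + bp * jb * Ring.inverse (1 + bp * jb) * (1 - bp * b)) := by rw [step_b]
      _ = b + jb := hb1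
  have M2 : (c + jc) * a * w = c + jc := by
    have e : (c + jc) * a * w
        = (1 + (1 - c * cp) * Ring.inverse (1 + jc * cp) * jc * cp)
            * (c * ((1 + cp * jc) * a * (1 + jb * bp) * (Ring.inverse (1 + y * k) * y)))
          * (1 + cp * jc) := by
      rw [hw, ← hc1]; noncomm_ring
    rw [e, M_qap, step_c, hc1]
  have M3 : w * a * w = w := by
    have e : w * a * w
        = (1 + jb * bp) * Ring.inverse (1 + y * k)
            * (y * ((1 + cp * jc) * a * (1 + jb * bp) * (Ring.inverse (1 + y * k) * y)))
          * (1 + cp * jc) := by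
      rw [hw]; noncomm_ring
    rw [e, M_qap, step_y, ← hw]
  -- membership: w ∈ (b+jb) R
  have hw2 : w = (b + jb)
      * (Ring.inverse (1 + bp * jb * Ring.inverse (1 + bp * jb) * (1 - bp * b))
          * (s * (Ring.inverse (1 + k * y) * (1 + cp * jc)))) := by
    calc w = (1 + jb * bp) * (Ring.inverse (1 + y * k) * y) * (1 + cp * jc) := by
          rw [hw]; noncomm_ring
      _ = (1 + jb * bp) * (y * Ring.inverse (1 + k * y)) * (1 + cp * jc) := by rw [hswap_u]
      _ = (1 + jb * bp) * b * (s * (Ring.inverse (1 + k * y) * (1 + cp * jc))) := by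
          rw [hs]; noncomm_ring
      _ = (1 + jb * bp) * b
          * (((1 + bp * jb * Ring.inverse (1 + bp * jb) * (1 - bp * b))
              * Ring.inverse (1 + bp * jb * Ring.inverse (1 + bp * jb) * (1 - bp * b)))
            * (s * (Ring.inverse (1 + k * y) * (1 + cp * jc)))) := by rw [cH1, one_mul]
      _ = ((1 + jb * bp) * b * (1 + bp * jb * Ring.inverse (1 + bp * jb) * (1 - bp * b)))
          * (Ring.inverse (1 + bp * jb * Ring.inverse (1 + bp * jb) * (1 - bp * b))
            * (s * (Ring.inverse (1 + k * y) * (1 + cp * jc)))) := by noncomm_ring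
      _ = (b + jb)
          * (Ring.inverse (1 + bp * jb * Ring.inverse (1 + bp * jb) * (1 - bp * b))
            * (s * (Ring.inverse (1 + k * y) * (1 + cp * jc)))) := by rw [hb1]
  -- membership: w ∈ R (c+jc)
  have hcq : c * (1 + cp * jc)
      = Ring.inverse (1 + (1 - c * cp) * Ring.inverse (1 + jc * cp) * jc * cp) * (c + jc) := by
    calc c * (1 + cp * jc)
        = (Ring.inverse (1 + (1 - c * cp) * Ring.inverse (1 + jc * cp) * jc * cp)
            * (1 + (1 - c * cp) * Ring.inverse (1 + jc * cp) * jc * cp)) * (c * (1 + cp * jc)) := by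
          rw [cG2, one_mul]
      _ = Ring.inverse (1 + (1 - c * cp) * Ring.inverse (1 + jc * cp) * jc * cp)
          * ((1 + (1 - c * cp) * Ring.inverse (1 + jc * cp) * jc * cp) * c * (1 + cp * jc)) := by
          noncomm_ring
      _ = Ring.inverse (1 + (1 - c * cp) * Ring.inverse (1 + jc * cp) * jc * cp) * (c + jc) := by
          rw [hc1]
  have hw3 : w = ((1 + jb * bp) * Ring.inverse (1 + y * k) * t
      * Ring.inverse (1 + (1 - c * cp) * Ring.inverse (1 + jc * cp) * jc * cp)) * (c + jc) := by
    calc w = (1 + jb * bp) * Ring.inverse (1 + y * k) * t * (c * (1 + cp * jc)) := by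
          rw [hw, ht]; noncomm_ring
      _ = (1 + jb * bp) * Ring.inverse (1 + y * k) * t
          * (Ring.inverse (1 + (1 - c * cp) * Ring.inverse (1 + jc * cp) * jc * cp)
            * (c + jc)) := by rw [hcq]
      _ = ((1 + jb * bp) * Ring.inverse (1 + y * k) * t
          * Ring.inverse (1 + (1 - c * cp) * Ring.inverse (1 + jc * cp) * jc * cp))
            * (c + jc) := by noncomm_ring
  have part1 : IsBCInverse a (b + jb) (c + jc) w := ⟨M2, M1, ⟨_, hw2⟩, ⟨_, hw3⟩⟩
  -- part 2
  have hz : IsUnit (1 + w * ja) := aux_unit_one_add (Ideal.mul_mem_left _ w hja)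
  have hz' : IsUnit (1 + ja * w) := aux_unit_one_add (aux_mul_right hja w)
  have hswap_z : Ring.inverse (1 + w * ja) * w = w * Ring.inverse (1 + ja * w) :=
    aux_swap w ja hz hz'
  have cz2 : Ring.inverse (1 + w * ja) * (1 + w * ja) = 1 := Ring.inverse_mul_cancel _ hz
  have cz'1 : (1 + ja * w) * Ring.inverse (1 + ja * w) = 1 := Ring.mul_inverse_cancel _ hz'
  -- part 3
  have g3a : (c + jc) * (a + ja) * (Ring.inverse (1 + w * ja) * w) = c + jc := by
    rw [hswap_z]
    have e : (c + jc) * (a + ja) * (w * Ring.inverse (1 + ja * w))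
        = ((c + jc) * a * w - (c + jc)) * Ring.inverse (1 + ja * w)
          + (c + jc) * ((1 + ja * w) * Ring.inverse (1 + ja * w)) := by noncomm_ring
    rw [e, M2, sub_self, zero_mul, zero_add, cz'1, mul_one]
  have g3b : (Ring.inverse (1 + w * ja) * w) * (a + ja) * (b + jb) = b + jb := by
    have e : (Ring.inverse (1 + w * ja) * w) * (a + ja) * (b + jb)
        = Ring.inverse (1 + w * ja) * (w * a * (b + jb) - (b + jb))
          + Ring.inverse (1 + w * ja) * ((1 + w * ja) * (b + jb)) := by noncomm_ring
    rw [e, M1, sub_self, mul_zero, zero_add, ← mul_assoc, cz2, one_mul]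
  refine ⟨part1, hz, g3a, g3b, ?_, ?_⟩
  · obtain ⟨S, hS⟩ := part1.2.2.1
    refine ⟨S * Ring.inverse (1 + ja * w), ?_⟩
    rw [hswap_z, hS, mul_assoc]
  · obtain ⟨T, hT⟩ := part1.2.2.2
    refine ⟨Ring.inverse (1 + w * ja) * T, ?_⟩
    rw [mul_assoc, ← hT]
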